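/- The Airy function A(x) = (1/2π) ∫_ℝ e^{ixξ} e^{iξ³} dξ satisfies A(0) = 1/(3 Γ(2/3)) and A'(0) = -1/(3 Γ(1/3)). -/

import Mathlib

open Real Filter intervalIntegral Complex MeasureTheory Set Topology

noncomputable def ff (x : ℝ) (z : ℂ) : ℂ := Complex.exp (Complex.I * (x * z + z ^ 3))

lemma hasDerivAt_ff (x : ℝ) (z : ℂ) :
    HasDerivAt (ff x) (Complex.I * (x + 3 * z ^ 2) * ff x z) z := by
  have h1 : HasDerivAt (fun z : ℂ => Complex.I * (x * z + z ^ 3))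
      (Complex.I * (x + 3 * z ^ 2)) z := by
    have := (((hasDerivAt_id z).const_mul (x : ℂ)).add (hasDerivAt_pow 3 z)).const_mul Complex.I
    exact this.congr_deriv (by ring)
  have := h1.cexp
  refine this.congr_deriv ?_
  simp only [ff]
  ring

lemma cont_ff (x : ℝ) : Continuous (ff x) := by
  unfold ff; fun_prop

lemma myswap {F : ℝ → ℝ → ℂ} (hF : Continuous fun p : ℝ × ℝ => F p.1 p.2)
    {a b c d : ℝ} (hab : a ≤ b) (hcd : c ≤ d) :
    ∫ s in a..b, ∫ t in c..d, F s t = ∫ t in c..d, ∫ s in a..b, F s t := by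
  rw [intervalIntegral.integral_of_le hab, intervalIntegral.integral_of_le hcd]
  simp_rw [intervalIntegral.integral_of_le hab, intervalIntegral.integral_of_le hcd]
  apply MeasureTheory.integral_integral_swap
  rw [Measure.prod_restrict]
  have : IntegrableOn (fun p : ℝ × ℝ => F p.1 p.2) (Icc a b ×ˢ Icc c d)
      (volume.prod volume) :=
    hF.continuousOn.integrableOn_compact (isCompact_Icc.prod isCompact_Icc)
  exact (this.mono_set (prod_mono Ioc_subset_Icc_self Ioc_subset_Icc_self))






noncomputable def DD (x θ t : ℝ) : ℂ :=
  Complex.I * Complex.exp (θ * Complex.I) *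
    (1 + t * Complex.exp (θ * Complex.I) *
      (Complex.I * (x + 3 * (t * Complex.exp (θ * Complex.I)) ^ 2))) *
    ff x (t * Complex.exp (θ * Complex.I))

lemma cont_DD (x : ℝ) : Continuous fun p : ℝ × ℝ => DD x p.1 p.2 := by
  unfold DD ff; fun_prop

-- derivative of w ↦ exp(w I) over ℂ
lemma hasDerivAt_ewI (w : ℂ) :
    HasDerivAt (fun w : ℂ => Complex.exp (w * Complex.I))
      (Complex.exp (w * Complex.I) * Complex.I) w := by
  simpa using ((hasDerivAt_id w).mul_const Complex.I).cexp

lemma stepA (x : ℝ) (t : ℝ) {Θ : ℝ} :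
    ∫ θ in (0:ℝ)..Θ, DD x θ t =
      Complex.exp (Θ * Complex.I) * ff x (t * Complex.exp (Θ * Complex.I)) - ff x t := by
  have key : ∀ θ : ℝ, HasDerivAt
      (fun θ : ℝ => Complex.exp (θ * Complex.I) * ff x (t * Complex.exp (θ * Complex.I)))
      (DD x θ t) θ := by
    intro θ
    have hC : HasDerivAt
        (fun w : ℂ => Complex.exp (w * Complex.I) * ff x (t * Complex.exp (w * Complex.I)))
        (DD x θ t) (θ : ℂ) := by
      have he := hasDerivAt_ewI (θ : ℂ)
      have hg : HasDerivAt (fun w : ℂ => ff x (t * Complex.exp (w * Complex.I)))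
          (Complex.I * (x + 3 * (t * Complex.exp ((θ:ℂ) * Complex.I)) ^ 2) *
            ff x (t * Complex.exp ((θ:ℂ) * Complex.I)) *
            (t * (Complex.exp ((θ:ℂ) * Complex.I) * Complex.I))) (θ : ℂ) :=
        (hasDerivAt_ff x _).comp _ (he.const_mul (t : ℂ))
      have := he.mul hg
      refine this.congr_deriv ?_
      unfold DD
      push_cast
      ring
    exact hC.comp_ofReal
  rw [intervalIntegral.integral_eq_sub_of_hasDerivAt (fun θ _ => key θ)
    (((cont_DD x).comp (continuous_id.prodMk continuous_const)).intervalIntegrable 0 Θ)]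
  simp [ff]

lemma stepB (x : ℝ) (θ : ℝ) {R : ℝ} :
    ∫ t in (0:ℝ)..R, DD x θ t =
      Complex.I * R * Complex.exp (θ * Complex.I) * ff x (R * Complex.exp (θ * Complex.I)) := by
  have key : ∀ t : ℝ, HasDerivAt
      (fun t : ℝ => Complex.I * t * Complex.exp (θ * Complex.I) *
        ff x (t * Complex.exp (θ * Complex.I))) (DD x θ t) t := by
    intro t
    have hC : HasDerivAt
        (fun w : ℂ => Complex.I * w * Complex.exp ((θ:ℂ) * Complex.I) *
          ff x (w * Complex.exp ((θ:ℂ) * Complex.I))) (DD x θ t) (t : ℂ) := by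
      have h1 : HasDerivAt (fun w : ℂ => Complex.I * w * Complex.exp ((θ:ℂ) * Complex.I))
          (Complex.I * Complex.exp ((θ:ℂ) * Complex.I)) (t : ℂ) := by
        simpa [mul_assoc, mul_comm, mul_left_comm] using
          (((hasDerivAt_id (t:ℂ)).const_mul Complex.I).mul_const
            (Complex.exp ((θ:ℂ) * Complex.I)))
      have h2 : HasDerivAt (fun w : ℂ => ff x (w * Complex.exp ((θ:ℂ) * Complex.I)))
          (Complex.I * (x + 3 * ((t:ℂ) * Complex.exp ((θ:ℂ) * Complex.I)) ^ 2) *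
            ff x ((t:ℂ) * Complex.exp ((θ:ℂ) * Complex.I)) *
            Complex.exp ((θ:ℂ) * Complex.I)) (t : ℂ) :=
        by exact (hasDerivAt_ff x _).comp _ (hasDerivAt_mul_const
          (Complex.exp ((θ:ℂ) * Complex.I)))
      have := h1.mul h2
      refine this.congr_deriv ?_
      unfold DD
      push_cast
      ring
    exact hC.comp_ofReal
  rw [intervalIntegral.integral_eq_sub_of_hasDerivAt (fun t _ => key t)
    (((cont_DD x).comp (continuous_const.prodMk continuous_id)).intervalIntegrable 0 R)]
  simp

lemma sector (x : ℝ) {R Θ : ℝ} (hR : 0 ≤ R) (hΘ : 0 ≤ Θ) :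
    (∫ t in (0:ℝ)..R, Complex.exp (Θ * Complex.I) * ff x (t * Complex.exp (Θ * Complex.I)))
      - ∫ t in (0:ℝ)..R, ff x t
    = ∫ θ in (0:ℝ)..Θ, Complex.I * R * Complex.exp (θ * Complex.I) *
        ff x (R * Complex.exp (θ * Complex.I)) := by
  have h1 : (∫ t in (0:ℝ)..R, Complex.exp (Θ * Complex.I) * ff x (t * Complex.exp (Θ * Complex.I)))
      - ∫ t in (0:ℝ)..R, ff x t
      = ∫ t in (0:ℝ)..R, (Complex.exp (Θ * Complex.I) * ff x (t * Complex.exp (Θ * Complex.I))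
          - ff x t) := by
    rw [intervalIntegral.integral_sub]
    · exact (Continuous.intervalIntegrable (by unfold ff; fun_prop) 0 R)
    · exact ((cont_ff x).comp Complex.continuous_ofReal).intervalIntegrable 0 R
  rw [h1]
  have h2 : ∀ t : ℝ, Complex.exp (Θ * Complex.I) * ff x (t * Complex.exp (Θ * Complex.I))
      - ff x t = ∫ θ in (0:ℝ)..Θ, DD x θ t := fun t => (stepA x t).symm
  simp_rw [h2]
  rw [← myswap (cont_DD x) hΘ hR]
  exact intervalIntegral.integral_congr fun θ _ => stepB x θ



lemma norm_cexp (w : ℂ) : ‖Complex.exp w‖ = Real.exp w.re := by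
  rw [Complex.norm_exp]

lemma norm_integrand (x : ℝ) {R : ℝ} (hR : 0 ≤ R) (θ : ℝ) :
    ‖Complex.I * R * Complex.exp (θ * Complex.I) * ff x (R * Complex.exp (θ * Complex.I))‖
      = R * Real.exp (-(x * R * Real.sin θ + R ^ 3 * Real.sin (3 * θ))) := by
  have h3 : (Complex.exp ((θ:ℂ) * Complex.I)) ^ 3 = Complex.exp ((3 * θ : ℝ) * Complex.I) := by
    rw [← Complex.exp_nat_mul]; push_cast; ring_nf
  have him : ((x : ℂ) * ((R : ℂ) * Complex.exp (θ * Complex.I))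
      + ((R : ℂ) * Complex.exp (θ * Complex.I)) ^ 3).im
      = x * R * Real.sin θ + R ^ 3 * Real.sin (3 * θ) := by
    rw [mul_pow, h3, ← Complex.ofReal_pow]
    simp only [Complex.add_im, Complex.mul_im, Complex.mul_re, Complex.ofReal_re,
      Complex.ofReal_im, Complex.exp_ofReal_mul_I_re, Complex.exp_ofReal_mul_I_im]
    ring
  have hre : (Complex.I * ((x : ℂ) * ((R : ℂ) * Complex.exp (θ * Complex.I))
      + ((R : ℂ) * Complex.exp (θ * Complex.I)) ^ 3)).re
      = -(x * R * Real.sin θ + R ^ 3 * Real.sin (3 * θ)) := by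
    rw [Complex.mul_re, Complex.I_re, Complex.I_im, him]; ring
  rw [ff, norm_mul, norm_mul, norm_mul, norm_cexp, norm_cexp, hre]
  have : ((θ:ℂ) * Complex.I).re = 0 := by simp
  rw [this]
  simp only [Complex.norm_I, Complex.norm_real, Real.norm_eq_abs, one_mul,
    Real.exp_zero, mul_one, _root_.abs_of_nonneg hR]

lemma exponent_bound (x : ℝ) {R θ : ℝ} (hR : 0 ≤ R) (hθ : 0 ≤ θ) (hθ' : θ ≤ π / 6) :
    -(x * R * Real.sin θ + R ^ 3 * Real.sin (3 * θ)) ≤ -((6 / π * R ^ 3 - |x| * R) * θ) := by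
  have hs0 : 0 ≤ Real.sin θ := Real.sin_nonneg_of_nonneg_of_le_pi hθ
    (le_trans hθ' (by linarith [Real.pi_pos]))
  have hs1 : Real.sin θ ≤ θ := Real.sin_le hθ
  have h1 : x * R * Real.sin θ ≥ -(|x| * R * θ) := by
    have hle : -(|x| * R) * Real.sin θ ≤ x * R * Real.sin θ := by
      apply mul_le_mul_of_nonneg_right _ hs0
      nlinarith [neg_abs_le x, abs_nonneg x]
    nlinarith [mul_le_mul_of_nonneg_left hs1 (mul_nonneg (abs_nonneg x) hR)]
  have h2 : 2 / π * (3 * θ) ≤ Real.sin (3 * θ) :=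
    Real.mul_le_sin (by linarith) (by linarith)
  have h3 : R ^ 3 * (2 / π * (3 * θ)) ≤ R ^ 3 * Real.sin (3 * θ) :=
    mul_le_mul_of_nonneg_left h2 (by positivity)
  have h4 : R ^ 3 * (2 / π * (3 * θ)) = 6 / π * R ^ 3 * θ := by ring
  linarith [h3, h1]

lemma exp_int_bound {c : ℝ} (hc : 0 < c) :
    ∫ θ in (0:ℝ)..(π/6), Real.exp (-(c * θ)) ≤ 1 / c := by
  have key : ∀ θ ∈ uIcc (0:ℝ) (π/6), HasDerivAt (fun θ => -Real.exp (-(c * θ)) / c)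
      (Real.exp (-(c * θ))) θ := by
    intro θ _
    have h := (((hasDerivAt_id θ).const_mul c).neg).exp
    have h2 := (h.neg).div_const c
    refine h2.congr_deriv ?_
    field_simp
    rfl
  rw [intervalIntegral.integral_eq_sub_of_hasDerivAt key
    (by apply Continuous.intervalIntegrable; fun_prop)]
  have heq : -Real.exp (-(c * (π/6))) / c - -Real.exp (-(c * 0)) / c
      = (1 - Real.exp (-(c * (π/6)))) / c := by
    simp [Real.exp_zero]; ring
  rw [heq]
  gcongr
  linarith [Real.exp_pos (-(c * (π/6)))]

lemma denom_tendsto (x : ℝ) : Tendsto (fun R : ℝ => 6 / π * R ^ 2 - |x|) atTop atTop := by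
  apply tendsto_atTop_add_const_right
  exact (tendsto_pow_atTop two_ne_zero).const_mul_atTop (by positivity)

lemma arc_tendsto (x : ℝ) :
    Tendsto (fun R : ℝ => ∫ θ in (0:ℝ)..(π/6), Complex.I * R * Complex.exp (θ * Complex.I) *
      ff x (R * Complex.exp (θ * Complex.I))) atTop (𝓝 0) := by
  have hπ6 : (0:ℝ) ≤ π / 6 := by positivity
  refine squeeze_zero_norm' (a := fun R => 1 / (6 / π * R ^ 2 - |x|)) ?_
    ((tendsto_inv_atTop_zero.comp (denom_tendsto x)).congr (fun R => by simp [one_div]))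
  · filter_upwards [eventually_ge_atTop (1:ℝ), (denom_tendsto x).eventually_ge_atTop 1]
      with R hR1 hd1
    have hR0 : (0:ℝ) < R := by linarith
    set c : ℝ := 6 / π * R ^ 3 - |x| * R with hc_def
    have hc_eq : c = R * (6 / π * R ^ 2 - |x|) := by rw [hc_def]; ring
    have hc_pos : 0 < c := by rw [hc_eq]; nlinarith
    have step1 : ‖∫ θ in (0:ℝ)..(π/6), Complex.I * R * Complex.exp (θ * Complex.I) *
        ff x (R * Complex.exp (θ * Complex.I))‖
        ≤ ∫ θ in (0:ℝ)..(π/6), ‖Complex.I * R * Complex.exp (θ * Complex.I) *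
          ff x (R * Complex.exp (θ * Complex.I))‖ :=
      intervalIntegral.norm_integral_le_integral_norm hπ6
    have step2 : ∫ θ in (0:ℝ)..(π/6), ‖Complex.I * R * Complex.exp (θ * Complex.I) *
          ff x (R * Complex.exp (θ * Complex.I))‖
        ≤ ∫ θ in (0:ℝ)..(π/6), R * Real.exp (-(c * θ)) := by
      apply intervalIntegral.integral_mono_on hπ6
      · apply Continuous.intervalIntegrable
        apply Continuous.norm
        unfold ff; fun_prop
      · apply Continuous.intervalIntegrable; fun_prop
      · intro θ hθ
        rw [norm_integrand x hR0.le θ]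
        apply mul_le_mul_of_nonneg_left _ hR0.le
        apply Real.exp_le_exp.mpr
        have := exponent_bound x hR0.le hθ.1 hθ.2
        calc -(x * R * Real.sin θ + R ^ 3 * Real.sin (3 * θ))
            ≤ -((6 / π * R ^ 3 - |x| * R) * θ) := this
          _ = -(c * θ) := by rw [hc_def]
    have step3 : ∫ θ in (0:ℝ)..(π/6), R * Real.exp (-(c * θ)) ≤ R * (1 / c) := by
      rw [intervalIntegral.integral_const_mul]
      exact mul_le_mul_of_nonneg_left (exp_int_bound hc_pos) hR0.le
    have step4 : R * (1 / c) = 1 / (6 / π * R ^ 2 - |x|) := by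
      rw [hc_eq]
      field_simp
    linarith



noncomputable def ww : ℂ := Complex.exp ((π/6 : ℝ) * Complex.I)

lemma ww3 : ww ^ 3 = Complex.I := by
  rw [ww, ← Complex.exp_nat_mul]
  have : (3:ℕ) * (((π/6:ℝ):ℂ) * Complex.I) = ((π/2:ℝ):ℂ) * Complex.I := by push_cast; ring
  rw [this, Complex.exp_mul_I, ← Complex.ofReal_cos, ← Complex.ofReal_sin]
  simp [Real.cos_pi_div_two, Real.sin_pi_div_two]

noncomputable def gray (x t : ℝ) : ℂ :=
  ww * Complex.exp (Complex.I * x * ww * t - t ^ 3)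

lemma gray_eq (x t : ℝ) : ww * ff x (t * ww) = gray x t := by
  unfold ff gray
  congr 1
  congr 1
  rw [mul_pow, ww3]
  linear_combination ((t:ℂ)^3) * Complex.I_sq

lemma ww_re : ww.re = Real.sqrt 3 / 2 := by
  rw [ww, Complex.exp_ofReal_mul_I_re, Real.cos_pi_div_six]

lemma ww_im : ww.im = 1 / 2 := by
  rw [ww, Complex.exp_ofReal_mul_I_im, Real.sin_pi_div_six]

lemma norm_cexp' (w : ℂ) : ‖Complex.exp w‖ = Real.exp w.re := by
  rw [Complex.norm_exp]

lemma norm_ww : ‖ww‖ = 1 := by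
  rw [ww, norm_cexp']
  simp

lemma norm_gray (x t : ℝ) : ‖gray x t‖ = Real.exp (-(x * t / 2) - t ^ 3) := by
  unfold gray
  rw [norm_mul, norm_ww, one_mul, norm_cexp']
  congr 1
  simp only [Complex.sub_re, Complex.mul_re, Complex.mul_im, Complex.I_re, Complex.I_im,
    Complex.ofReal_re, Complex.ofReal_im, ← Complex.ofReal_pow, ww_re, ww_im]
  ring

lemma gray_integrable (x : ℝ) : IntegrableOn (gray x) (Ioi 0) := by
  have hmeas : AEStronglyMeasurable (gray x) (volume.restrict (Ioi 0)) := by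
    apply Continuous.aestronglyMeasurable
    unfold gray; fun_prop
  rw [IntegrableOn, ← integrable_norm_iff hmeas]
  have : (fun t => ‖gray x t‖) = fun t => Real.exp (-(x * t / 2) - t ^ 3) := by
    funext t; exact norm_gray x t
  rw [this]
  apply integrable_of_isBigO_exp_neg (a := 0) (b := 1) one_pos
  · apply Continuous.continuousOn; fun_prop
  · rw [Asymptotics.isBigO_iff]
    refine ⟨1, ?_⟩
    filter_upwards [eventually_ge_atTop (1 : ℝ), eventually_ge_atTop (|x|/2 + 1)] with t ht1 ht2
    rw [Real.norm_eq_abs, Real.norm_eq_abs, abs_of_pos (Real.exp_pos _),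
      abs_of_pos (Real.exp_pos _), one_mul]
    apply Real.exp_le_exp.mpr
    have h1 : -(x * t / 2) ≤ |x| * t / 2 := by
      nlinarith [mul_nonneg (by linarith [neg_abs_le x] : (0:ℝ) ≤ |x| + x)
        (by linarith : (0:ℝ) ≤ t)]
    nlinarith [le_abs_self x, neg_abs_le x, sq_nonneg t, sq_nonneg (t-1)]


noncomputable def Bc (x : ℝ) : ℂ := ∫ t in Ioi (0:ℝ), gray x t


lemma tendsto_pos_half (x : ℝ) :
    Tendsto (fun R : ℝ => ∫ t in (0:ℝ)..R, ff x ↑t) atTop (𝓝 (Bc x)) := by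
  have hray : Tendsto (fun R : ℝ => ∫ t in (0:ℝ)..R, gray x t) atTop (𝓝 (Bc x)) :=
    intervalIntegral_tendsto_integral_Ioi 0 (gray_integrable x) tendsto_id
  have hlim := hray.sub (arc_tendsto x)
  rw [sub_zero] at hlim
  refine Tendsto.congr' ?_ hlim
  · filter_upwards [eventually_ge_atTop (0:ℝ)] with R hR
    have hs := sector x (Θ := π/6) hR (by positivity)
    have hg : (∫ t in (0:ℝ)..R, gray x t)
        = ∫ t in (0:ℝ)..R, Complex.exp ((π/6:ℝ) * Complex.I) *
          ff x (t * Complex.exp ((π/6:ℝ) * Complex.I)) := by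
      refine intervalIntegral.integral_congr fun t _ => ?_
      rw [← gray_eq x t, ww]
    rw [hg]
    linear_combination hs

lemma ff_neg (x t : ℝ) : ff x ↑(-t) = (starRingEnd ℂ) (ff x ↑t) := by
  rw [ff, ff, ← Complex.exp_conj]
  congr 1
  simp only [map_mul, map_add, map_pow, Complex.conj_I, Complex.conj_ofReal]
  push_cast
  ring

lemma intervalIntegral_conj {f : ℝ → ℂ} {a b : ℝ} :
    ∫ t in a..b, (starRingEnd ℂ) (f t) = (starRingEnd ℂ) (∫ t in a..b, f t) := by
  rw [intervalIntegral, intervalIntegral, integral_conj, integral_conj, map_sub]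

lemma sym_split (x R : ℝ) :
    (∫ ξ in (-R)..R, ff x ↑ξ)
      = (∫ t in (0:ℝ)..R, ff x ↑t) + (starRingEnd ℂ) (∫ t in (0:ℝ)..R, ff x ↑t) := by
  have hcont : Continuous fun t : ℝ => ff x ↑t := (cont_ff x).comp Complex.continuous_ofReal
  have hsplit : (∫ ξ in (-R)..(0:ℝ), ff x ↑ξ) + (∫ ξ in (0:ℝ)..R, ff x ↑ξ)
      = ∫ ξ in (-R)..R, ff x ↑ξ :=
    intervalIntegral.integral_add_adjacent_intervals
      (hcont.intervalIntegrable _ _) (hcont.intervalIntegrable _ _)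
  have hneg : (∫ ξ in (-R)..(0:ℝ), ff x ↑ξ) = (starRingEnd ℂ) (∫ t in (0:ℝ)..R, ff x ↑t) := by
    have h1 : (∫ t in (0:ℝ)..R, ff x ↑(-t)) = ∫ ξ in (-R)..(0:ℝ), ff x ↑ξ := by
      simpa using intervalIntegral.integral_comp_neg (a := 0) (b := R) (fun ξ => ff x ↑ξ)
    rw [← h1]
    simp_rw [ff_neg x]
    exact _root_.intervalIntegral_conj
  rw [← hsplit, hneg]
  ring

lemma tendsto_full (x : ℝ) :
    Tendsto (fun R : ℝ => (1 / (2 * π) : ℂ) * ∫ ξ in (-R)..R, ff x ↑ξ) atTop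
      (𝓝 ((1 / (2 * π) : ℂ) * (Bc x + (starRingEnd ℂ) (Bc x)))) := by
  apply Tendsto.const_mul
  have h1 := tendsto_pos_half x
  have h2 : Tendsto (fun R : ℝ => (starRingEnd ℂ) (∫ t in (0:ℝ)..R, ff x ↑t)) atTop
      (𝓝 ((starRingEnd ℂ) (Bc x))) :=
    ((Complex.continuous_conj.tendsto _).comp h1)
  have := h1.add h2
  refine this.congr fun R => (sym_split x R).symm




-- real Gamma integrals
lemma gamma_int1 : ∫ t in Ioi (0:ℝ), Real.exp (-t ^ 3) = Real.Gamma (1/3) / 3 := by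
  have h := _root_.integral_exp_neg_rpow (p := 3) (by norm_num)
  have hcong : ∫ t in Ioi (0:ℝ), Real.exp (-t ^ 3)
      = ∫ t in Ioi (0:ℝ), Real.exp (-t ^ (3:ℝ)) := by
    refine setIntegral_congr_fun measurableSet_Ioi fun t ht => ?_
    rw [← Real.rpow_natCast t 3]; norm_num
  rw [hcong, h, Real.Gamma_add_one (by norm_num)]
  ring
lemma gamma_int2 : ∫ t in Ioi (0:ℝ), t * Real.exp (-t ^ 3) = Real.Gamma (2/3) / 3 := by
  have h := _root_.integral_rpow_mul_exp_neg_rpow (p := 3) (q := 1) (by norm_num) (by norm_num)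
  have hcong : ∫ t in Ioi (0:ℝ), t * Real.exp (-t ^ 3)
      = ∫ t in Ioi (0:ℝ), t ^ (1:ℝ) * Real.exp (-t ^ (3:ℝ)) := by
    refine setIntegral_congr_fun measurableSet_Ioi fun t ht => ?_
    rw [← Real.rpow_natCast t 3, Real.rpow_one]; norm_num
  rw [hcong, h]
  norm_num
  ring

lemma Bc_zero : Bc 0 = ww * (Real.Gamma (1/3) / 3 : ℝ) := by
  unfold Bc
  have h1 : ∀ t ∈ Ioi (0:ℝ), gray 0 t = ww * ((Real.exp (-t ^ 3) : ℝ) : ℂ) := by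
    intro t _
    unfold gray
    rw [show Complex.I * ((0:ℝ):ℂ) * ww * (t:ℂ) - (t:ℂ)^3 = ((-t^3 : ℝ) : ℂ) by push_cast; ring,
      ← Complex.ofReal_exp]
  rw [setIntegral_congr_fun measurableSet_Ioi h1, MeasureTheory.integral_const_mul]
  have h2 : (∫ a in Ioi (0:ℝ), ((Real.exp (-a^3) : ℝ) : ℂ))
      = ((Real.Gamma (1/3)/3 : ℝ) : ℂ) := by
    rw [← gamma_int1]; exact integral_ofReal
  rw [h2]

lemma hasDerivAt_Bc : HasDerivAt Bc (Complex.I * ww ^ 2 * (Real.Gamma (2/3) / 3 : ℝ)) 0 := by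
  have key := _root_.hasDerivAt_integral_of_dominated_loc_of_deriv_le
    (μ := volume.restrict (Ioi (0:ℝ))) (x₀ := (0:ℝ))
    (F := fun x t => gray x t)
    (F' := fun x t => Complex.I * ww * t * gray x t)
    (bound := fun t => t * Real.exp (t/2 - t ^ 3))
    (s := Metric.ball 0 1) (Metric.ball_mem_nhds 0 one_pos)
    ?_ (gray_integrable 0) ?_ ?_ ?_ ?_
  · have h2 := key.2
    have heq : (∫ t in Ioi (0:ℝ), Complex.I * ww * t * gray 0 t)
        = Complex.I * ww ^ 2 * (Real.Gamma (2/3) / 3 : ℝ) := by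
      have h1 : ∀ t ∈ Ioi (0:ℝ), Complex.I * ww * t * gray 0 t
          = (Complex.I * ww ^ 2) * ((t * Real.exp (-t ^ 3) : ℝ) : ℂ) := by
        intro t _
        unfold gray
        rw [show Complex.I * ((0:ℝ):ℂ) * ww * (t:ℂ) - (t:ℂ)^3 = ((-t^3 : ℝ) : ℂ) by push_cast; ring,
          ← Complex.ofReal_exp]
        push_cast [Complex.ofReal_exp]
        ring
      rw [setIntegral_congr_fun measurableSet_Ioi h1, MeasureTheory.integral_const_mul]
      have h3 : (∫ a in Ioi (0:ℝ), ((a * Real.exp (-a^3) : ℝ) : ℂ))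
          = ((Real.Gamma (2/3)/3 : ℝ) : ℂ) := by
        rw [← gamma_int2]; exact integral_ofReal
      rw [h3]
    rwa [heq] at h2
  · filter_upwards with x
    apply Continuous.aestronglyMeasurable
    unfold gray; fun_prop
  · apply Continuous.aestronglyMeasurable
    unfold gray; fun_prop
  · rw [ae_restrict_iff' measurableSet_Ioi]
    filter_upwards with t ht x hx
    rw [norm_mul, norm_gray]
    simp only [Metric.mem_ball, dist_zero_right, Real.norm_eq_abs] at hx
    have ht0 : 0 < t := ht
    have : ‖Complex.I * ww * (t:ℂ)‖ = t := by
      rw [norm_mul, norm_mul, Complex.norm_I, one_mul]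
      rw [show ‖ww‖ = 1 from by rw [ww, Complex.norm_exp]; simp]
      simp [abs_of_pos ht0]
    rw [this]
    apply mul_le_mul_of_nonneg_left _ ht0.le
    apply Real.exp_le_exp.mpr
    nlinarith [mul_le_mul_of_nonneg_right (neg_le_abs x) ht0.le,
      mul_le_mul_of_nonneg_right hx.le ht0.le]
  · -- bound integrable
    apply integrable_of_isBigO_exp_neg (a := 0) (b := 1) one_pos
    · apply Continuous.continuousOn; fun_prop
    · rw [Asymptotics.isBigO_iff]
      refine ⟨1, ?_⟩
      filter_upwards [eventually_ge_atTop (2:ℝ)] with t ht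
      rw [Real.norm_eq_abs, Real.norm_eq_abs, one_mul, abs_of_pos (Real.exp_pos _),
        abs_of_pos (by positivity)]
      have hte : t ≤ Real.exp t := by linarith [Real.add_one_le_exp t]
      calc t * Real.exp (t/2 - t^3) ≤ Real.exp t * Real.exp (t/2 - t^3) := by
            apply mul_le_mul_of_nonneg_right hte (Real.exp_pos _).le
        _ = Real.exp (t + (t/2 - t^3)) := by rw [← Real.exp_add]
        _ ≤ Real.exp (-1 * t) := by
            apply Real.exp_le_exp.mpr
            nlinarith [mul_le_mul_of_nonneg_right (by nlinarith : (4:ℝ) ≤ t^2)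
              (by linarith : (0:ℝ) ≤ t)]
  · rw [ae_restrict_iff' measurableSet_Ioi]
    filter_upwards with t ht x hx
    have hC : HasDerivAt (fun w : ℂ => ww * Complex.exp (Complex.I * w * ww * t - (t:ℂ) ^ 3))
        (Complex.I * ww * t * (ww * Complex.exp (Complex.I * x * ww * t - (t:ℂ) ^ 3))) (x : ℂ) := by
      have hinner : HasDerivAt (fun w : ℂ => Complex.I * w * ww * t - (t:ℂ) ^ 3)
          (Complex.I * ww * t) (x : ℂ) := by
        have := (((hasDerivAt_id (x:ℂ)).const_mul Complex.I).mul_const ww).mul_const (t:ℂ)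
        have h2 := this.sub_const ((t:ℂ) ^ 3)
        refine h2.congr_deriv ?_
        ring
      have := (hinner.cexp).const_mul ww
      refine this.congr_deriv ?_
      ring
    have := hC.comp_ofReal
    simpa [gray] using this



lemma gamma_reflect : Real.Gamma (1/3) * Real.Gamma (2/3) * Real.sqrt 3 = 2 * π := by
  have h := Real.Gamma_mul_Gamma_one_sub (1/3)
  rw [show (1:ℝ) - 1/3 = 2/3 by norm_num, show π * (1/3) = π/3 by ring,
    Real.sin_pi_div_three] at h
  have h3 : Real.sqrt 3 * Real.sqrt 3 = 3 := Real.mul_self_sqrt (by norm_num)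
  have hs : Real.sqrt 3 ≠ 0 := by positivity
  field_simp at h
  nlinarith [h]

lemma gamma_pos_13 : 0 < Real.Gamma (1/3) := Real.Gamma_pos_of_pos (by norm_num)
lemma gamma_pos_23 : 0 < Real.Gamma (2/3) := Real.Gamma_pos_of_pos (by norm_num)

lemma hw2 : ww ^ 2 = Complex.exp ((π/3 : ℝ) * Complex.I) := by
  rw [ww, ← Complex.exp_nat_mul]
  congr 1
  push_cast
  ring

lemma key_re : Complex.I * ww ^ 2 + (starRingEnd ℂ) (Complex.I * ww ^ 2)
    = ((-Real.sqrt 3 : ℝ) : ℂ) := by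
  rw [Complex.add_conj]
  have : (Complex.I * ww ^ 2).re = -(Real.sqrt 3 / 2) := by
    rw [hw2, Complex.mul_re, Complex.I_re, Complex.I_im, Complex.exp_ofReal_mul_I_im,
      Real.sin_pi_div_three]
    ring
  rw [this]
  push_cast
  ring

lemma ww_add_conj : ww + (starRingEnd ℂ) ww = ((Real.sqrt 3 : ℝ) : ℂ) := by
  rw [Complex.add_conj, ww_re]
  push_cast
  ring

/-- The Airy function `A(x) = (1/2π) ∫ e^{ixξ + iξ³} dξ` (as a conditionally convergent
oscillatory integral, i.e. the limit of the truncated integrals) satisfies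
`A(0) = 1/(3Γ(2/3))` and `A'(0) = -1/(3Γ(1/3))`. -/
theorem airy_values_at_zero (A : ℝ → ℂ)
    (hA : ∀ x : ℝ, Tendsto
      (fun R : ℝ => (1 / (2 * π) : ℂ) *
        ∫ ξ in (-R)..R, Complex.exp (Complex.I * (x * ξ + ξ ^ 3)))
      atTop (nhds (A x))) :
    A 0 = 1 / (3 * (Real.Gamma (2 / 3) : ℂ)) ∧
      deriv A 0 = -(1 / (3 * (Real.Gamma (1 / 3) : ℂ))) := by
  have hAeq : ∀ x : ℝ, A x = (1 / (2 * π) : ℂ) * (Bc x + (starRingEnd ℂ) (Bc x)) :=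
    fun x => tendsto_nhds_unique (hA x) (tendsto_full x)
  have hπ : (0:ℝ) < π := Real.pi_pos
  have hs3 : (0:ℝ) < Real.sqrt 3 := by positivity
  have h3 : Real.sqrt 3 * Real.sqrt 3 = 3 := Real.mul_self_sqrt (by norm_num)
  constructor
  · rw [hAeq 0, Bc_zero]
    have hconj : (starRingEnd ℂ) (ww * ((Real.Gamma (1/3) / 3 : ℝ) : ℂ))
        = (starRingEnd ℂ) ww * ((Real.Gamma (1/3) / 3 : ℝ) : ℂ) := by
      rw [map_mul, Complex.conj_ofReal]
    rw [hconj, show ww * ((Real.Gamma (1/3) / 3 : ℝ) : ℂ)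
        + (starRingEnd ℂ) ww * ((Real.Gamma (1/3) / 3 : ℝ) : ℂ)
        = (ww + (starRingEnd ℂ) ww) * ((Real.Gamma (1/3) / 3 : ℝ) : ℂ) by ring,
      ww_add_conj]
    -- now a pure real-cast identity
    have : (1 / (2 * π) : ℝ) * (Real.sqrt 3 * (Real.Gamma (1/3) / 3))
        = 1 / (3 * Real.Gamma (2/3)) := by
      field_simp
      nlinarith [gamma_reflect, gamma_pos_13, gamma_pos_23]
    calc (1 / (2 * ↑π) : ℂ) * (((Real.sqrt 3 : ℝ) : ℂ) * ((Real.Gamma (1/3) / 3 : ℝ) : ℂ))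
        = (((1 / (2 * π) : ℝ) * (Real.sqrt 3 * (Real.Gamma (1/3) / 3)) : ℝ) : ℂ) := by
          push_cast; ring
      _ = ((1 / (3 * Real.Gamma (2/3)) : ℝ) : ℂ) := by rw [this]
      _ = 1 / (3 * (Real.Gamma (2 / 3) : ℂ)) := by push_cast; ring
  · have hA_fun : A = fun x => (1 / (2 * π) : ℂ) * (Bc x + (starRingEnd ℂ) (Bc x)) :=
      funext hAeq
    have hder : HasDerivAt (fun x : ℝ => (1 / (2 * π) : ℂ) * (Bc x + (starRingEnd ℂ) (Bc x)))
        ((1 / (2 * π) : ℂ) * ((Complex.I * ww ^ 2 * (Real.Gamma (2/3) / 3 : ℝ))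
          + (starRingEnd ℂ) (Complex.I * ww ^ 2 * (Real.Gamma (2/3) / 3 : ℝ)))) 0 := by
      exact (hasDerivAt_Bc.add hasDerivAt_Bc.star).const_mul _
    rw [hA_fun, hder.deriv]
    have hconj2 : (starRingEnd ℂ) (Complex.I * ww ^ 2 * ((Real.Gamma (2/3) / 3 : ℝ) : ℂ))
        = (starRingEnd ℂ) (Complex.I * ww ^ 2) * ((Real.Gamma (2/3) / 3 : ℝ) : ℂ) := by
      rw [map_mul, Complex.conj_ofReal]
    rw [hconj2, show Complex.I * ww ^ 2 * ((Real.Gamma (2/3) / 3 : ℝ) : ℂ)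
        + (starRingEnd ℂ) (Complex.I * ww ^ 2) * ((Real.Gamma (2/3) / 3 : ℝ) : ℂ)
        = (Complex.I * ww ^ 2 + (starRingEnd ℂ) (Complex.I * ww ^ 2))
          * ((Real.Gamma (2/3) / 3 : ℝ) : ℂ) by ring, key_re]
    have : (1 / (2 * π) : ℝ) * (-Real.sqrt 3 * (Real.Gamma (2/3) / 3))
        = -(1 / (3 * Real.Gamma (1/3))) := by
      field_simp
      nlinarith [gamma_reflect, gamma_pos_13, gamma_pos_23]
    calc (1 / (2 * ↑π) : ℂ) * (((-Real.sqrt 3 : ℝ) : ℂ) * ((Real.Gamma (2/3) / 3 : ℝ) : ℂ))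
        = (((1 / (2 * π) : ℝ) * (-Real.sqrt 3 * (Real.Gamma (2/3) / 3)) : ℝ) : ℂ) := by
          push_cast; ring
      _ = ((-(1 / (3 * Real.Gamma (1/3))) : ℝ) : ℂ) := by rw [this]
      _ = -(1 / (3 * (Real.Gamma (1 / 3) : ℂ))) := by push_cast; ring
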